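/- Let f ∈ k[[x_1, ..., x_n]] be a reduced (square-free) homogeneous polynomial of degree d. Then for every m, the m-th jet support closure of (f) equals (f) + m^{m+1}. -/

import Mathlib

open Polynomial

/-- The truncated polynomial ring `A[t]/(t^(m+1))`. -/
abbrev JetTrunc (A : Type) [CommRing A] (m : ℕ) : Type :=
  Polynomial A ⧸ (Ideal.span {(X : Polynomial A) ^ (m + 1)} : Ideal (Polynomial A))

/-- The image of the variable `t` in `A[t]/(t^(m+1))`. -/
noncomputable def jetT (A : Type) [CommRing A] (m : ℕ) : JetTrunc A m :=
  Ideal.Quotient.mk _ (X : Polynomial A)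

/-- A test datum for the `m`-th jet closure of an ideal `I` of a local `k`-algebra `(R, 𝔪)`:
a `k`-algebra `A` together with a `k`-algebra map `φ : R → A[t]/(t^(m+1))` killing `I`
and sending the maximal ideal `𝔪` into `(t)` (i.e. an `A`-point of the scheme of local
`m`-jets of `Spec (R/I)` over the closed point). -/
structure JetTest (k : Type) [CommRing k] {R : Type} [CommRing R] [Algebra k R]
    (𝔪 : Ideal R) (m : ℕ) (I : Ideal R) where
  A : Type
  [instCommRing : CommRing A]
  [instAlgebra : Algebra k A]
  φ : R →ₐ[k] JetTrunc A m
  ker_I : ∀ f ∈ I, φ f = 0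
  max_to_t : ∀ f ∈ 𝔪, φ f ∈ Ideal.span {jetT A m}

attribute [instance] JetTest.instCommRing JetTest.instAlgebra

/-- The `m`-th jet closure `I^{m-jc}` of an ideal `I` in a local `k`-algebra `(R, 𝔪)`:
the intersection of the kernels of all jet test maps (functor-of-points description of the
kernel of `μ_m : R → R_m[t]/(t^(m+1), I_m, 𝔪^e)`). -/
noncomputable def jetClosure (k : Type) [CommRing k] {R : Type} [CommRing R] [Algebra k R]
    (𝔪 : Ideal R) (m : ℕ) (I : Ideal R) : Ideal R :=
  sInf { J : Ideal R | ∃ T : JetTest k 𝔪 m I, J = RingHom.ker T.φ }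

/-- A test datum for the `m`-th jet support closure: like a jet closure test,
but with the coefficient `k`-algebra `A` required to be reduced (functor-of-points
description of maps from `(R_m/(I_m + 𝔪^e))_red`). -/
structure JetSupportTest (k : Type) [CommRing k] {R : Type} [CommRing R] [Algebra k R]
    (𝔪 : Ideal R) (m : ℕ) (I : Ideal R) where
  A : Type
  [instCommRing : CommRing A]
  [instReduced : IsReduced A]
  [instAlgebra : Algebra k A]
  φ : R →ₐ[k] JetTrunc A m
  ker_I : ∀ f ∈ I, φ f = 0
  max_to_t : ∀ f ∈ 𝔪, φ f ∈ Ideal.span {jetT A m}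

attribute [instance] JetSupportTest.instCommRing JetSupportTest.instReduced
  JetSupportTest.instAlgebra

/-- The `m`-th jet support closure `I^{m-jsc}` of an ideal `I` in a local `k`-algebra
`(R, 𝔪)`. -/
noncomputable def jetSupportClosure (k : Type) [CommRing k] {R : Type} [CommRing R]
    [Algebra k R] (𝔪 : Ideal R) (m : ℕ) (I : Ideal R) : Ideal R :=
  sInf { J : Ideal R | ∃ T : JetSupportTest k 𝔪 m I, J = RingHom.ker T.φ }

/-- The maximal ideal `(x_1, ..., x_n)` of the formal power series ring `k[[x_1, ..., x_n]]`. -/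
noncomputable def mIdeal (k : Type) [Field k] (n : ℕ) : Ideal (MvPowerSeries (Fin n) k) :=
  RingHom.ker (MvPowerSeries.constantCoeff : MvPowerSeries (Fin n) k →+* k)


/-! ### Auxiliary material for the proof -/

namespace JSC14

variable (k : Type) [Field k] (n m : ℕ) (f : MvPolynomial (Fin n) k)

lemma degree_add (a b : Fin n →₀ ℕ) : (a + b).degree = a.degree + b.degree := by
  simp [Finsupp.degree_eq_weight_one, map_add]

lemma degree_single_one (i : Fin n) : (Finsupp.single i 1).degree = 1 := by
  simp [Finsupp.degree_single]

lemma mem_mIdeal_iff (g : MvPowerSeries (Fin n) k) :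
    g ∈ mIdeal k n ↔ MvPowerSeries.constantCoeff g = 0 :=
  RingHom.mem_ker

/-- A power series all of whose coefficients in total degree `< d` vanish lies in `𝔪^d`. -/
lemma mem_mIdeal_pow {d : ℕ} {g : MvPowerSeries (Fin n) k}
    (h : ∀ α : Fin n →₀ ℕ, α.degree < d → MvPowerSeries.coeff α g = 0) :
    g ∈ mIdeal k n ^ d := by
  classical
  induction d generalizing g with
  | zero => simpa using Submodule.mem_top
  | succ d ih =>
    set hf : Fin n → MvPowerSeries (Fin n) k := fun i =>
      (fun β => if (β + Finsupp.single i 1).support.min = (i : WithTop (Fin n)) then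
          MvPowerSeries.coeff (β + Finsupp.single i 1) g else 0) with hfdef
    have hco : ∀ i β, MvPowerSeries.coeff β (hf i) =
        if (β + Finsupp.single i 1).support.min = (i : WithTop (Fin n)) then
          MvPowerSeries.coeff (β + Finsupp.single i 1) g else 0 := fun i β => rfl
    have key : ∀ (i : Fin n) (α : Fin n →₀ ℕ),
        MvPowerSeries.coeff α (MvPowerSeries.X i * hf i) =
        if Finsupp.single i 1 ≤ α ∧ α.support.min = (i : WithTop (Fin n)) then
          MvPowerSeries.coeff α g else 0 := by
      intro i α
      rw [MvPowerSeries.X_def, MvPowerSeries.coeff_monomial_mul]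
      by_cases hle : Finsupp.single i 1 ≤ α
      · rw [if_pos hle, one_mul, hco, tsub_add_cancel_of_le hle]
        by_cases hmin : α.support.min = (i : WithTop (Fin n)) <;> simp [hmin, hle]
      · simp [hle]
    have hg : g = ∑ i : Fin n, MvPowerSeries.X i * hf i := by
      apply MvPowerSeries.ext; intro α
      rw [map_sum]
      by_cases hα : α = 0
      · subst hα
        rw [h 0 (by simpa [map_zero] using Nat.succ_pos d)]
        refine (Finset.sum_eq_zero fun i _ => ?_).symm
        rw [key]
        simp [Finsupp.single_le_iff]
      · have hne : α.support.Nonempty := Finsupp.support_nonempty_iff.mpr hα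
        set j0 := α.support.min' hne with hj0def
        have hmin : α.support.min = (j0 : WithTop (Fin n)) := (Finset.coe_min' hne).symm
        have hj0 : α j0 ≠ 0 := Finsupp.mem_support_iff.mp (α.support.min'_mem hne)
        have hsle : Finsupp.single j0 1 ≤ α :=
          Finsupp.single_le_iff.mpr (Nat.one_le_iff_ne_zero.mpr hj0)
        have hiff : ∀ i : Fin n,
            (Finsupp.single i 1 ≤ α ∧ α.support.min = (i : WithTop (Fin n))) ↔ i = j0 := by
          intro i
          constructor
          · rintro ⟨-, h2⟩
            have h3 : (i : WithTop (Fin n)) = (j0 : WithTop (Fin n)) := h2.symm.trans hmin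
            exact_mod_cast h3
          · rintro rfl; exact ⟨hsle, hmin⟩
        rw [Finset.sum_congr rfl fun i _ => key i α,
          Finset.sum_congr rfl fun i _ => if_congr (hiff i) rfl rfl,
          Finset.sum_ite_eq' Finset.univ j0 fun _ => MvPowerSeries.coeff α g,
          if_pos (Finset.mem_univ j0)]
    rw [hg]
    refine Ideal.sum_mem _ fun i _ => ?_
    rw [pow_succ']
    refine Ideal.mul_mem_mul ((mem_mIdeal_iff k n _).mpr (MvPowerSeries.constantCoeff_X i))
      (ih fun β hβ => ?_)
    rw [hco]
    rcases eq_or_ne ((β + Finsupp.single i 1).support.min) (i : WithTop (Fin n)) with hc | hc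
    · rw [if_pos hc]
      apply h
      rw [degree_add, degree_single_one]
      omega
    · rw [if_neg hc]

/-- Every jet support test kernel contains `I ⊔ 𝔪^(m+1)`. -/
lemma sup_le_ker (I : Ideal (MvPowerSeries (Fin n) k))
    (T : JetSupportTest k (mIdeal k n) m I) :
    I ⊔ mIdeal k n ^ (m + 1) ≤ RingHom.ker T.φ := by
  apply sup_le
  · intro g hgI
    exact RingHom.mem_ker.mpr (T.ker_I g hgI)
  · intro g hg
    rw [RingHom.mem_ker]
    have ht : jetT T.A m ^ (m + 1) = 0 := by
      rw [jetT, ← map_pow, Ideal.Quotient.eq_zero_iff_mem]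
      exact Ideal.subset_span rfl
    have h1 : Ideal.map T.φ (mIdeal k n ^ (m + 1)) ≤ ⊥ := by
      rw [Ideal.map_pow]
      calc Ideal.map T.φ (mIdeal k n) ^ (m + 1)
          ≤ Ideal.span {jetT T.A m} ^ (m + 1) :=
            Ideal.pow_right_mono
              (Ideal.map_le_iff_le_comap.mpr fun x hx => Ideal.mem_comap.mpr (T.max_to_t x hx)) _
        _ = Ideal.span {jetT T.A m ^ (m + 1)} := Ideal.span_singleton_pow _ _
        _ = ⊥ := by rw [ht]; exact Ideal.span_singleton_eq_bot.mpr rfl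
    have h2 := h1 (Ideal.mem_map_of_mem T.φ hg)
    rwa [Ideal.mem_bot] at h2

/-! ### The universal reduced test -/

/-- The reduced coefficient algebra `k[x_1,...,x_n]/(f)`. -/
abbrev Af : Type := MvPolynomial (Fin n) k ⧸ Ideal.span {f}

noncomputable instance : CommRing (Af k n f) := Ideal.Quotient.commRing _

noncomputable def piA : MvPolynomial (Fin n) k →ₐ[k] Af k n f :=
  Ideal.Quotient.mkₐ k (Ideal.span {f})

lemma piA_f_eq_zero : piA k n f f = 0 := by
  rw [piA, Ideal.Quotient.mkₐ_eq_mk, Ideal.Quotient.eq_zero_iff_mem]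
  exact Ideal.subset_span rfl

/-- The map `k[x] → (k[x]/(f))[t]` sending `x_i` to `a_i t`. -/
noncomputable def eps : MvPolynomial (Fin n) k →ₐ[k] Polynomial (Af k n f) :=
  MvPolynomial.aeval fun i => Polynomial.C (piA k n f (MvPolynomial.X i)) * Polynomial.X

lemma eps_monomial (α : Fin n →₀ ℕ) (c : k) :
    eps k n f (MvPolynomial.monomial α c) =
      Polynomial.C (piA k n f (MvPolynomial.monomial α c)) * Polynomial.X ^ α.degree := by
  classical
  rw [eps, MvPolynomial.aeval_monomial, MvPolynomial.monomial_eq, map_mul]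
  have h1 : (algebraMap k (Polynomial (Af k n f))) c = Polynomial.C (piA k n f (MvPolynomial.C c)) := by
    rw [Polynomial.algebraMap_apply, ← (piA k n f).commutes c, MvPolynomial.algebraMap_eq]
  have h2 : (α.prod fun i e => (Polynomial.C (piA k n f (MvPolynomial.X i)) * Polynomial.X) ^ e) =
      Polynomial.C (piA k n f (α.prod fun i e => MvPolynomial.X i ^ e)) * Polynomial.X ^ α.degree := by
    rw [Finsupp.prod]
    simp_rw [mul_pow]
    rw [Finset.prod_mul_distrib, Finsupp.prod, map_prod, map_prod,
      Finset.prod_pow_eq_pow_sum]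
    simp_rw [map_pow]
    rfl
  rw [h1, h2, map_mul]
  ring

lemma MvPolynomial.homogeneousComponent_monomial (j : ℕ) (α : Fin n →₀ ℕ) (c : k) :
    MvPolynomial.homogeneousComponent j (MvPolynomial.monomial α c : MvPolynomial (Fin n) k) =
      if α.degree = j then MvPolynomial.monomial α c else 0 := by
  classical
  ext d
  rw [MvPolynomial.coeff_homogeneousComponent]
  rcases eq_or_ne α.degree j with h | h
  · rw [if_pos h]
    by_cases hdj : d.degree = j
    · rw [if_pos hdj]
    · rw [if_neg hdj, MvPolynomial.coeff_monomial, if_neg]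
      rintro rfl; exact hdj h
  · rw [if_neg h, MvPolynomial.coeff_zero]
    by_cases hdj : d.degree = j
    · rw [if_pos hdj, MvPolynomial.coeff_monomial, if_neg]
      rintro rfl; exact h hdj
    · rw [if_neg hdj]

lemma coeff_eps (p : MvPolynomial (Fin n) k) (j : ℕ) :
    (eps k n f p).coeff j = piA k n f (MvPolynomial.homogeneousComponent j p) := by
  classical
  conv_lhs => rw [p.as_sum]
  rw [map_sum, Polynomial.finset_sum_coeff]
  conv_rhs => rw [p.as_sum]
  rw [map_sum, map_sum]
  refine Finset.sum_congr rfl fun α _ => ?_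
  rw [eps_monomial, MvPolynomial.homogeneousComponent_monomial, Polynomial.coeff_C_mul,
    Polynomial.coeff_X_pow]
  rcases eq_or_ne α.degree j with h | h
  · rw [if_pos h.symm, if_pos h, mul_one]
  · rw [if_neg (Ne.symm h), if_neg h, mul_zero, map_zero]

lemma mem_span_Xpow (q : Polynomial (Af k n f)) :
    q ∈ Ideal.span {(Polynomial.X : Polynomial (Af k n f)) ^ (m + 1)} ↔
      ∀ j < m + 1, q.coeff j = 0 := by
  rw [Ideal.mem_span_singleton]
  exact Polynomial.X_pow_dvd_iff

noncomputable def mkQ : Polynomial (Af k n f) →ₐ[k] JetTrunc (Af k n f) m :=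
  Ideal.Quotient.mkₐ k (Ideal.span {(Polynomial.X : Polynomial (Af k n f)) ^ (m + 1)})

lemma mkQ_eq_zero_iff (q : Polynomial (Af k n f)) :
    mkQ k n m f q = 0 ↔ ∀ j < m + 1, q.coeff j = 0 := by
  rw [mkQ, Ideal.Quotient.mkₐ_eq_mk, Ideal.Quotient.eq_zero_iff_mem, mem_span_Xpow]

/-- Truncation of a power series in total degree `≤ m`. -/
noncomputable def truncTot (g : MvPowerSeries (Fin n) k) : MvPolynomial (Fin n) k :=
  ∑ α ∈ (Finset.Iic (Finsupp.equivFunOnFinite.symm fun _ : Fin n => m)).filter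
      fun α => α.degree ≤ m,
    MvPolynomial.monomial α (MvPowerSeries.coeff α g)

lemma mem_DegLe (d : Fin n →₀ ℕ) :
    d ∈ (Finset.Iic (Finsupp.equivFunOnFinite.symm fun _ : Fin n => m)).filter
        (fun α => α.degree ≤ m) ↔ d.degree ≤ m := by
  rw [Finset.mem_filter, Finset.mem_Iic]
  refine ⟨fun h => h.2, fun h => ⟨Finsupp.le_def.mpr fun i => ?_, h⟩⟩
  simpa using (Finsupp.le_degree i d).trans h

lemma coeff_truncTot (g : MvPowerSeries (Fin n) k) (d : Fin n →₀ ℕ) :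
    (truncTot k n m g).coeff d =
      if d.degree ≤ m then MvPowerSeries.coeff d g else 0 := by
  classical
  rw [truncTot, MvPolynomial.coeff_sum]
  simp_rw [MvPolynomial.coeff_monomial]
  rw [Finset.sum_ite_eq' _ d fun α => MvPowerSeries.coeff α g]
  by_cases hd : d.degree ≤ m
  · rw [if_pos ((mem_DegLe n m d).mpr hd), if_pos hd]
  · rw [if_neg (fun hmem => hd ((mem_DegLe n m d).mp hmem)), if_neg hd]

lemma truncTot_one : truncTot k n m (1 : MvPowerSeries (Fin n) k) = 1 := by
  classical
  ext d
  rw [coeff_truncTot, MvPowerSeries.coeff_one, MvPolynomial.coeff_one]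
  by_cases hd : d = 0
  · subst hd; simp [map_zero]
  · simp [hd, Ne.symm hd]

lemma truncTot_C (r : k) :
    truncTot k n m (MvPowerSeries.C r) = MvPolynomial.C r := by
  classical
  ext d
  rw [coeff_truncTot, MvPowerSeries.coeff_C, MvPolynomial.coeff_C]
  by_cases hd : d = 0
  · subst hd; simp [map_zero]
  · simp [hd, Ne.symm hd]

lemma truncTot_add (g h : MvPowerSeries (Fin n) k) :
    truncTot k n m (g + h) = truncTot k n m g + truncTot k n m h := by
  classical
  ext d
  rw [MvPolynomial.coeff_add, coeff_truncTot, coeff_truncTot, coeff_truncTot, map_add]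
  split_ifs <;> simp

lemma mkQ_eps_congr (P Q : MvPolynomial (Fin n) k)
    (h : ∀ d : Fin n →₀ ℕ, d.degree ≤ m → P.coeff d = Q.coeff d) :
    mkQ k n m f (eps k n f P) = mkQ k n m f (eps k n f Q) := by
  rw [← sub_eq_zero, ← map_sub, ← map_sub, mkQ_eq_zero_iff]
  intro j hj
  rw [coeff_eps]
  have hz : MvPolynomial.homogeneousComponent j (P - Q) = 0 := by
    ext d
    rw [MvPolynomial.coeff_homogeneousComponent, MvPolynomial.coeff_zero]
    by_cases hdj : d.degree = j
    · rw [if_pos hdj, MvPolynomial.coeff_sub, h d (by omega), sub_self]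
    · rw [if_neg hdj]
  rw [hz, map_zero]

noncomputable def evQ : MvPolynomial (Fin n) k →ₐ[k] JetTrunc (Af k n f) m :=
  (mkQ k n m f).comp (eps k n f)

lemma evQ_apply (P : MvPolynomial (Fin n) k) :
    evQ k n m f P = mkQ k n m f (eps k n f P) := rfl

lemma evQ_congr (P Q : MvPolynomial (Fin n) k)
    (h : ∀ d : Fin n →₀ ℕ, d.degree ≤ m → P.coeff d = Q.coeff d) :
    evQ k n m f P = evQ k n m f Q := mkQ_eps_congr k n m f P Q h

/-- The underlying function of the test map `k[[x]] → (k[x]/(f))[t]/(t^(m+1))`. -/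
noncomputable def phiFun (g : MvPowerSeries (Fin n) k) : JetTrunc (Af k n f) m :=
  evQ k n m f (truncTot k n m g)

lemma phiFun_one : phiFun k n m f 1 = 1 := by
  rw [phiFun, truncTot_one]
  exact (evQ k n m f).toRingHom.map_one

lemma phiFun_zero : phiFun k n m f 0 = 0 := by
  have h0 : truncTot k n m (0 : MvPowerSeries (Fin n) k) = 0 := by
    classical
    ext d
    rw [coeff_truncTot, MvPolynomial.coeff_zero, map_zero]
    split_ifs <;> rfl
  rw [phiFun, h0]
  exact (evQ k n m f).toRingHom.map_zero

lemma phiFun_add (g h : MvPowerSeries (Fin n) k) :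
    phiFun k n m f (g + h) = phiFun k n m f g + phiFun k n m f h := by
  rw [phiFun, phiFun, phiFun, truncTot_add]
  exact (evQ k n m f).toRingHom.map_add _ _

lemma phiFun_mul (g h : MvPowerSeries (Fin n) k) :
    phiFun k n m f (g * h) = phiFun k n m f g * phiFun k n m f h := by
  rw [phiFun, phiFun, phiFun]
  have hcongr : evQ k n m f (truncTot k n m (g * h)) =
      evQ k n m f (truncTot k n m g * truncTot k n m h) := by
    classical
    apply evQ_congr
    intro d hd
    rw [coeff_truncTot, if_pos hd, MvPolynomial.coeff_mul, MvPowerSeries.coeff_mul]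
    refine Finset.sum_congr rfl fun p hp => ?_
    have hadd : p.1 + p.2 = d := Finset.HasAntidiagonal.mem_antidiagonal.mp hp
    have hdeg : p.1.degree + p.2.degree = d.degree := by rw [← degree_add, hadd]
    have h1 : p.1.degree ≤ m := by omega
    have h2 : p.2.degree ≤ m := by omega
    rw [coeff_truncTot, if_pos h1, coeff_truncTot, if_pos h2]
  rw [hcongr]
  exact (evQ k n m f).toRingHom.map_mul _ _

lemma phiFun_commutes (r : k) :
    phiFun k n m f (algebraMap k (MvPowerSeries (Fin n) k) r) =
      algebraMap k (JetTrunc (Af k n f) m) r := by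
  rw [phiFun, ← MvPowerSeries.c_eq_algebraMap, truncTot_C]
  exact (evQ k n m f).commutes r

/-- The universal reduced test map `k[[x]] → (k[x]/(f))[t]/(t^(m+1))`, `x_i ↦ a_i t`. -/
noncomputable def phi : MvPowerSeries (Fin n) k →ₐ[k] JetTrunc (Af k n f) m :=
  { toFun := phiFun k n m f
    map_one' := phiFun_one k n m f
    map_mul' := phiFun_mul k n m f
    map_zero' := phiFun_zero k n m f
    map_add' := phiFun_add k n m f
    commutes' := phiFun_commutes k n m f }

lemma phi_apply (g : MvPowerSeries (Fin n) k) :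
    phi k n m f g = mkQ k n m f (eps k n f (truncTot k n m g)) := rfl

/-- `φ` kills `f` (this is where homogeneity of `f` is used). -/
lemma phi_coe_f {d : ℕ} (hf : f.IsHomogeneous d) :
    phi k n m f (f : MvPowerSeries (Fin n) k) = 0 := by
  classical
  rw [phi_apply, mkQ_eq_zero_iff]
  intro j hj
  rw [coeff_eps]
  have e1 : MvPolynomial.homogeneousComponent j (truncTot k n m (f : MvPowerSeries (Fin n) k)) =
      MvPolynomial.homogeneousComponent j f := by
    ext e
    rw [MvPolynomial.coeff_homogeneousComponent, MvPolynomial.coeff_homogeneousComponent]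
    by_cases he : e.degree = j
    · rw [if_pos he, if_pos he, coeff_truncTot, if_pos (by omega), MvPolynomial.coeff_coe]
    · rw [if_neg he, if_neg he]
  rw [e1, MvPolynomial.homogeneousComponent_of_mem ((MvPolynomial.mem_homogeneousSubmodule _ _).mpr hf)]
  rcases eq_or_ne j d with h | h
  · rw [if_pos h, piA_f_eq_zero]
  · rw [if_neg h, map_zero]

lemma phi_max_to_t (g : MvPowerSeries (Fin n) k) (hg : g ∈ mIdeal k n) :
    phi k n m f g ∈ Ideal.span {jetT (Af k n f) m} := by
  classical
  have h0 : (eps k n f (truncTot k n m g)).coeff 0 = 0 := by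
    rw [coeff_eps, MvPolynomial.homogeneousComponent_zero, coeff_truncTot,
      if_pos (by simp [map_zero]),
      MvPowerSeries.coeff_zero_eq_constantCoeff_apply, (mem_mIdeal_iff k n g).mp hg,
      map_zero, map_zero]
  obtain ⟨q, hq⟩ := Polynomial.X_dvd_iff.mpr h0
  rw [Ideal.mem_span_singleton, phi_apply, hq, map_mul]
  exact ⟨mkQ k n m f q, by rw [jetT, mkQ, Ideal.Quotient.mkₐ_eq_mk]⟩

/-- The kernel of `φ` is contained in `(f) + 𝔪^(m+1)`. -/
lemma ker_phi_le :
    RingHom.ker (phi k n m f) ≤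
      Ideal.span {(f : MvPowerSeries (Fin n) k)} ⊔ mIdeal k n ^ (m + 1) := by
  classical
  intro g hg
  have h0 : ∀ j < m + 1,
      piA k n f (MvPolynomial.homogeneousComponent j (truncTot k n m g)) = 0 := by
    intro j hj
    rw [← coeff_eps]
    exact (mkQ_eq_zero_iff k n m f _).mp (by rw [← phi_apply]; exact RingHom.mem_ker.mp hg) j hj
  set Q : MvPolynomial (Fin n) k :=
    ∑ j ∈ Finset.range (m + 1), MvPolynomial.homogeneousComponent j (truncTot k n m g) with hQdef
  have hfQ : f ∣ Q := by
    refine Finset.dvd_sum fun j hjm => ?_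
    have := h0 j (Finset.mem_range.mp hjm)
    rwa [piA, Ideal.Quotient.mkₐ_eq_mk, Ideal.Quotient.eq_zero_iff_mem,
      Ideal.mem_span_singleton] at this
  have hQmem : (Q : MvPowerSeries (Fin n) k) ∈
      Ideal.span {(f : MvPowerSeries (Fin n) k)} := by
    rw [Ideal.mem_span_singleton]
    obtain ⟨c, hc⟩ := hfQ
    exact ⟨(c : MvPowerSeries (Fin n) k), by rw [hc]; push_cast; ring⟩
  have hrem : g - (Q : MvPowerSeries (Fin n) k) ∈ mIdeal k n ^ (m + 1) := by
    apply mem_mIdeal_pow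
    intro α hα
    have hdeg : α.degree ≤ m := by omega
    rw [map_sub, MvPolynomial.coeff_coe, sub_eq_zero, hQdef, MvPolynomial.coeff_sum]
    simp_rw [MvPolynomial.coeff_homogeneousComponent]
    rw [Finset.sum_ite_eq _ α.degree fun _ => (truncTot k n m g).coeff α]
    rw [if_pos (Finset.mem_range.mpr (by omega)), coeff_truncTot, if_pos hdeg]
  have hgQ : g = (Q : MvPowerSeries (Fin n) k) + (g - (Q : MvPowerSeries (Fin n) k)) := by
    ring
  rw [hgQ]
  exact Ideal.add_mem _ (Ideal.mem_sup_left hQmem) (Ideal.mem_sup_right hrem)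

/-- The universal reduced jet support test. -/
noncomputable def T0 {d : ℕ} (hf : f.IsHomogeneous d) (hred : Squarefree f) :
    JetSupportTest k (mIdeal k n) m (Ideal.span {(f : MvPowerSeries (Fin n) k)}) where
  A := Af k n f
  instReduced := by
    refine (Ideal.isRadical_iff_quotient_reduced _).mp ?_
    exact isRadical_iff_span_singleton.mp hred.isRadical
  φ := phi k n m f
  ker_I := by
    intro g hg
    rw [Ideal.mem_span_singleton] at hg
    obtain ⟨c, rfl⟩ := hg
    have hm : phi k n m f ((f : MvPowerSeries (Fin n) k) * c) =
        phi k n m f (f : MvPowerSeries (Fin n) k) * phi k n m f c :=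
      (phi k n m f).toRingHom.map_mul _ _
    rw [hm, phi_coe_f k n m f hf, zero_mul]
  max_to_t := fun g hg => phi_max_to_t k n m f g hg

end JSC14

/-- for a reduced (square-free) homogeneous polynomial `f` of degree `d`,
the `m`-th jet support closure of `(f)` in `k[[x_1, ..., x_n]]` equals `(f) + 𝔪^(m+1)`,
for every `m`. -/
theorem jetSupportClosure_reduced_homogeneous (k : Type) [Field k] [IsAlgClosed k]
    [CharZero k] (n d : ℕ) (f : MvPolynomial (Fin n) k) (hf : f.IsHomogeneous d)
    (hred : Squarefree f) (m : ℕ) :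
    jetSupportClosure k (mIdeal k n) m (Ideal.span {(f : MvPowerSeries (Fin n) k)}) =
      Ideal.span {(f : MvPowerSeries (Fin n) k)} ⊔ (mIdeal k n) ^ (m + 1) := by
  classical
  refine le_antisymm ?_ (le_sInf ?_)
  · have h1 : jetSupportClosure k (mIdeal k n) m
        (Ideal.span {(f : MvPowerSeries (Fin n) k)}) ≤
        RingHom.ker (JSC14.T0 k n m f hf hred).φ :=
      sInf_le ⟨JSC14.T0 k n m f hf hred, rfl⟩
    exact h1.trans (JSC14.ker_phi_le k n m f)
  · rintro J ⟨T, rfl⟩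
    exact JSC14.sup_le_ker k n m (Ideal.span {(f : MvPowerSeries (Fin n) k)}) T
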